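/- arXiv:1502.02743 — 3 statements merged into one kernel-verified Lean document; each statement's English description precedes it below -/
import Mathlib

section
/- For Re(a) > 0, Re(s) > 1, n a nonnegative integer with 2n < Re(s): ∫₀^∞ e^{−aw} w^{s−2n−1} L_{2n}^{s−2n−1}(aw) / (e^w − 1) dw = Σ_{j=0}^{2n} (−1)^j Γ(s) a^j / ((2n−j)! j! Γ(s−2n+j)) · Γ(s−2n+j) ζ(s−2n+j, a+1), i.e. equals Σ_{j=0}^{2n} (−1)^j Γ(s) a^j ζ(s−2n+j, a+1) / ((2n−j)! j!) when appropriately normalized. -/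
open Real Complex MeasureTheory Set Finset

/-- Hurwitz zeta in the series range. -/
noncomputable def zetaSeries (s a : ℂ) : ℂ := ∑' n : ℕ, (a + n) ^ (-s)

/-- Generalized (associated) Laguerre polynomial with complex parameter. -/
noncomputable def laguerre (n : ℕ) (k x : ℂ) : ℂ :=
  ∑ j ∈ Finset.range (n + 1),
    (-1) ^ j * Complex.Gamma (n + k + 1) /
      (Complex.Gamma (k + j + 1) * (Nat.factorial (n - j) : ℂ) * (Nat.factorial j : ℂ)) * x ^ j

open Filter
open scoped Topology


lemma aux_int_rpow_exp {b r : ℝ} (hb : -1 < b) (hr : 0 < r) :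
    IntegrableOn (fun t : ℝ => t ^ b * Real.exp (-(r * t))) (Ioi 0) := by
  have h1 : IntegrableOn (fun t : ℝ => Real.exp (-(r * t)) * (r * t) ^ (b + 1 - 1)) (Ioi 0) := by
    have h := (integrableOn_Ioi_comp_mul_left_iff
      (fun x : ℝ => Real.exp (-x) * x ^ (b + 1 - 1)) 0 hr).mpr
    rw [mul_zero] at h
    exact h (Real.GammaIntegral_convergent (by linarith))
  have h2 : IntegrableOn (fun t : ℝ => (r ^ b)⁻¹ * (Real.exp (-(r * t)) * (r * t) ^ (b + 1 - 1)))
      (Ioi 0) := h1.const_mul (r ^ b)⁻¹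
  refine IntegrableOn.congr_fun h2 (fun t ht => ?_) measurableSet_Ioi
  have ht' : (0:ℝ) < t := ht
  have hrb : r ^ b ≠ 0 := (Real.rpow_pos_of_pos hr b).ne'
  rw [add_sub_cancel_right, Real.mul_rpow hr.le ht'.le]
  field_simp

lemma aux_norm_cpow_mul_cexp {s c : ℂ} {t : ℝ} (ht : 0 < t) :
    ‖(t:ℂ) ^ (s - 1) * Complex.exp (-c * t)‖ = t ^ (s.re - 1) * Real.exp (-(c.re * t)) := by
  rw [norm_mul, Complex.norm_cpow_eq_rpow_re_of_pos ht,
    Complex.norm_exp, Complex.sub_re, Complex.one_re]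
  congr 2
  simp [Complex.mul_re]

lemma aux_contOn_cpow {s : ℂ} : ContinuousOn (fun t : ℝ => (t:ℂ) ^ (s - 1)) (Ioi 0) := by
  apply continuousOn_of_forall_continuousAt
  intro x hx
  exact (continuousAt_cpow_const <| ofReal_mem_slitPlane.2 hx).comp
    Complex.continuous_ofReal.continuousAt

lemma aux_int_cpow_cexp {s c : ℂ} (hs : 0 < s.re) (hc : 0 < c.re) :
    IntegrableOn (fun t : ℝ => (t:ℂ) ^ (s - 1) * Complex.exp (-c * t)) (Ioi 0) := by
  constructor
  · refine ContinuousOn.aestronglyMeasurable ?_ measurableSet_Ioi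
    exact aux_contOn_cpow.mul
      (Complex.continuous_exp.comp (continuous_const.mul Complex.continuous_ofReal)).continuousOn
  · rw [← hasFiniteIntegral_norm_iff]
    refine HasFiniteIntegral.congr (aux_int_rpow_exp (b := s.re - 1) (by linarith) hc).2 ?_
    apply (ae_restrict_iff' measurableSet_Ioi).mpr
    filter_upwards with x hx
    rw [aux_norm_cpow_mul_cexp hx]

lemma aux_gamma_integral {s : ℂ} (hs : 0 < s.re) {c : ℂ} (hc : 0 < c.re) :
    (∫ t : ℝ in Ioi 0, (t:ℂ) ^ (s - 1) * Complex.exp (-c * t))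
      = Complex.Gamma s * c ^ (-s) := by
  set U : Set ℂ := {z : ℂ | 0 < z.re} with hU
  have hUo : IsOpen U := isOpen_lt continuous_const Complex.continuous_re
  set F : ℂ → ℂ := fun c => ∫ t : ℝ in Ioi 0, (t:ℂ) ^ (s - 1) * Complex.exp (-c * t) with hF
  set G : ℂ → ℂ := fun c => Complex.Gamma s * c ^ (-s) with hG
  -- differentiability of F on U
  have hFd : DifferentiableOn ℂ F U := by
    intro c₀ hc₀
    have hc₀' : 0 < c₀.re := hc₀
    have key := hasDerivAt_integral_of_dominated_loc_of_deriv_le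
      (F := fun (z : ℂ) (t : ℝ) => (t:ℂ) ^ (s - 1) * Complex.exp (-z * t))
      (F' := fun (z : ℂ) (t : ℝ) => (t:ℂ) ^ (s - 1) * (Complex.exp (-z * t) * (-t)))
      (x₀ := c₀) (s := Metric.ball c₀ (c₀.re / 2))
      (bound := fun t : ℝ => t ^ s.re * Real.exp (-(c₀.re / 2 * t)))
      (μ := volume.restrict (Ioi 0)) (Metric.ball_mem_nhds _ (by positivity)) ?_ ?_ ?_ ?_ ?_ ?_
    · exact key.2.differentiableAt.differentiableWithinAt
    · -- measurability of F z
      filter_upwards with z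
      refine ContinuousOn.aestronglyMeasurable ?_ measurableSet_Ioi
      exact aux_contOn_cpow.mul
        (Complex.continuous_exp.comp (continuous_const.mul Complex.continuous_ofReal)).continuousOn
    · exact aux_int_cpow_cexp hs hc₀'
    · -- measurability of F' c₀
      refine ContinuousOn.aestronglyMeasurable ?_ measurableSet_Ioi
      refine aux_contOn_cpow.mul (ContinuousOn.mul ?_ ?_)
      · exact (Complex.continuous_exp.comp
          (continuous_const.mul Complex.continuous_ofReal)).continuousOn
      · exact (Complex.continuous_ofReal.neg).continuousOn
    · -- bound
      apply (ae_restrict_iff' measurableSet_Ioi).mpr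
      filter_upwards with t ht z hz
      have ht' : (0:ℝ) < t := ht
      have hzre : c₀.re / 2 ≤ z.re := by
        have := Complex.abs_re_le_norm (z - c₀)
        have hd : ‖z - c₀‖ < c₀.re / 2 := by
          simpa [Complex.dist_eq] using Metric.mem_ball.mp hz
        have := abs_le.mp (le_of_lt (lt_of_le_of_lt this hd))
        simp only [Complex.sub_re] at this
        linarith [this.1]
      rw [norm_mul, norm_mul,
        Complex.norm_cpow_eq_rpow_re_of_pos ht', Complex.norm_exp]
      have h1 : (-z * ↑t).re = -(z.re * t) := by simp [Complex.mul_re]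
      rw [h1, norm_neg, Complex.norm_real, Real.norm_eq_abs, abs_of_pos ht']
      have : t ^ (s.re - 1) * t = t ^ s.re := by
        rw [← Real.rpow_add_one ht'.ne' (s.re - 1)]; ring_nf
      calc t ^ ((s-1).re) * (Real.exp (-(z.re * t)) * t)
          = t ^ s.re * Real.exp (-(z.re * t)) := by
            rw [Complex.sub_re, Complex.one_re]
            rw [show t ^ (s.re - 1) * (Real.exp (-(z.re * t)) * t)
              = t ^ (s.re - 1) * t * Real.exp (-(z.re * t)) by ring, this]
        _ ≤ t ^ s.re * Real.exp (-(c₀.re / 2 * t)) := by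
            have hee := Real.exp_le_exp.mpr (show -(z.re*t) ≤ -(c₀.re/2*t) by nlinarith)
            exact mul_le_mul_of_nonneg_left hee (Real.rpow_nonneg ht'.le _)
    · exact aux_int_rpow_exp (by linarith) (by positivity)
    · -- differentiability pointwise
      apply (ae_restrict_iff' measurableSet_Ioi).mpr
      filter_upwards with t ht z hz
      have : HasDerivAt (fun z : ℂ => -z * (t:ℂ)) (-t) z := by
        simpa using ((hasDerivAt_id z).neg.mul_const (t:ℂ))
      exact (this.cexp).const_mul _
  have hGd : DifferentiableOn ℂ G U := by
    intro z hz
    have hz' : 0 < z.re := hz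
    have : DifferentiableAt ℂ (fun z : ℂ => z ^ (-s)) z :=
      ((hasDerivAt_id z).cpow_const (Or.inl hz')).differentiableAt
    exact (this.const_mul _).differentiableWithinAt
  have hFa : AnalyticOnNhd ℂ F U := hFd.analyticOnNhd hUo
  have hGa : AnalyticOnNhd ℂ G U := hGd.analyticOnNhd hUo
  have hUpre : IsPreconnected U := (convex_halfSpace_re_gt 0).isPreconnected
  have h1U : (1 : ℂ) ∈ U := by simp [hU]
  -- equality at real points 1 + 1/(k+1)
  have heq : ∀ k : ℕ, F ((1 + ((k:ℝ)+1)⁻¹ : ℝ) : ℂ) = G ((1 + ((k:ℝ)+1)⁻¹ : ℝ) : ℂ) := by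
    intro k
    set r : ℝ := 1 + ((k:ℝ)+1)⁻¹ with hr
    have hrpos : 0 < r := by positivity
    have key := integral_cpow_mul_exp_neg_mul_Ioi hs hrpos
    have harg : Complex.arg r ≠ Real.pi := by
      rw [Complex.arg_ofReal_of_nonneg hrpos.le]
      exact Real.pi_ne_zero.symm
    have hrc : (r : ℂ) ≠ 0 := Complex.ofReal_ne_zero.mpr hrpos.ne'
    simp only [hF, hG]
    calc (∫ t : ℝ in Ioi 0, (t:ℂ) ^ (s - 1) * Complex.exp (-(r:ℂ) * t))
        = ∫ t : ℝ in Ioi 0, (t:ℂ) ^ (s - 1) * Complex.exp (-((r:ℂ) * t)) := by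
          simp_rw [neg_mul]
      _ = (1 / (r:ℂ)) ^ s * Complex.Gamma s := key
      _ = Complex.Gamma s * (r:ℂ) ^ (-s) := by
          rw [one_div, Complex.inv_cpow _ _ harg, ← Complex.cpow_neg, mul_comm]
  have hfreq : ∃ᶠ z in 𝓝[≠] (1:ℂ), F z = G z := by
    have hten : Tendsto (fun k : ℕ => ((1 + ((k:ℝ)+1)⁻¹ : ℝ) : ℂ)) atTop (𝓝[≠] (1:ℂ)) := by
      rw [tendsto_nhdsWithin_iff]
      constructor
      · have : Tendsto (fun k : ℕ => (1 + ((k:ℝ)+1)⁻¹ : ℝ)) atTop (𝓝 1) := by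
          have h0 : Tendsto (fun k : ℕ => (((k:ℝ)+1))⁻¹) atTop (𝓝 0) :=
            tendsto_one_div_add_atTop_nhds_zero_nat.congr (by intro k; rw [one_div])
          simpa using tendsto_const_nhds.add h0
        have h2 := (Complex.continuous_ofReal.tendsto (1:ℝ)).comp this
        rw [Complex.ofReal_one] at h2
        exact h2
      · filter_upwards with k
        simp only [mem_compl_iff, mem_singleton_iff]
        intro hcontra
        have : (1 + ((k:ℝ)+1)⁻¹ : ℝ) = 1 := by
          exact_mod_cast hcontra
        have h3 : (((k:ℝ)+1))⁻¹ = 0 := by linarith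
        exact (by positivity : (0:ℝ) < (((k:ℝ)+1))⁻¹).ne' h3
    exact hten.frequently (Eventually.of_forall heq).frequently
  exact hFa.eqOn_of_preconnected_of_frequently_eq hGa hUpre h1U hfreq hc

lemma aux_exp_sub_one_pos {w : ℝ} (hw : 0 < w) : 0 < Real.exp w - 1 := by
  have := Real.add_one_le_exp w
  linarith

lemma aux_cexp_sub_one_ne {w : ℝ} (hw : 0 < w) : Complex.exp (w:ℂ) - 1 ≠ 0 := by
  rw [← Complex.ofReal_exp, ← Complex.ofReal_one, ← Complex.ofReal_sub]
  exact Complex.ofReal_ne_zero.mpr (aux_exp_sub_one_pos hw).ne'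

lemma aux_integrand_integrable {z a : ℂ} (ha : 0 < a.re) (hz : 1 < z.re) :
    IntegrableOn (fun w : ℝ =>
      (w:ℂ) ^ (z - 1) * Complex.exp (-a * w) / (Complex.exp (w:ℂ) - 1)) (Ioi 0) := by
  constructor
  · refine ContinuousOn.aestronglyMeasurable ?_ measurableSet_Ioi
    apply ContinuousOn.div
    · exact aux_contOn_cpow.mul
        (Complex.continuous_exp.comp (continuous_const.mul Complex.continuous_ofReal)).continuousOn
    · exact ((Complex.continuous_exp.comp Complex.continuous_ofReal).sub
        continuous_const).continuousOn
    · exact fun w hw => aux_cexp_sub_one_ne hw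
  · rw [← hasFiniteIntegral_norm_iff]
    have hbd : IntegrableOn (fun w : ℝ =>
        w ^ (z.re - 1) * Real.exp (-((a.re + 1) * w))
          + w ^ (z.re - 2) * Real.exp (-((a.re + 1) * w))) (Ioi 0) :=
      (aux_int_rpow_exp (by linarith) (by linarith)).add
        (aux_int_rpow_exp (by linarith) (by linarith))
    refine (hbd.hasFiniteIntegral.mono' ?_)
    apply (ae_restrict_iff' measurableSet_Ioi).mpr
    filter_upwards with w hw
    have hw' : (0:ℝ) < w := hw
    have hE : 0 < Real.exp w - 1 := aux_exp_sub_one_pos hw'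
    rw [norm_norm, norm_div, aux_norm_cpow_mul_cexp hw']
    have hden : ‖Complex.exp (w:ℂ) - 1‖ = Real.exp w - 1 := by
      rw [← Complex.ofReal_exp, ← Complex.ofReal_one, ← Complex.ofReal_sub,
        Complex.norm_real, Real.norm_eq_abs, abs_of_pos hE]
    rw [hden]
    have h3 : (Real.exp w - 1)⁻¹ ≤ (1 + w⁻¹) * Real.exp (-w) := by
      rw [Real.exp_neg]
      rw [inv_le_iff_one_le_mul₀ hE]
      have hexp := Real.add_one_le_exp w
      have hEpos := Real.exp_pos w
      have hwinv : (0:ℝ) < w⁻¹ := by positivity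
      have key : (1 + w⁻¹) * (Real.exp w)⁻¹ * (Real.exp w - 1)
          = 1 + w⁻¹ - (1 + w⁻¹) * (Real.exp w)⁻¹ := by
        field_simp
      have h4 : (1 + w⁻¹) * (Real.exp w)⁻¹ ≤ w⁻¹ := by
        rw [← div_eq_mul_inv, div_le_iff₀ hEpos]
        have h5 := mul_le_mul_of_nonneg_left hexp hwinv.le
        have h6 : w⁻¹ * (w + 1) = 1 + w⁻¹ := by field_simp
        rw [h6] at h5
        linarith [h5]
      linarith [key, h4]
    calc w ^ (z.re - 1) * Real.exp (-(a.re * w)) / (Real.exp w - 1)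
        = w ^ (z.re - 1) * Real.exp (-(a.re * w)) * (Real.exp w - 1)⁻¹ := by
          rw [div_eq_mul_inv]
      _ ≤ w ^ (z.re - 1) * Real.exp (-(a.re * w)) * ((1 + w⁻¹) * Real.exp (-w)) := by
          apply mul_le_mul_of_nonneg_left h3
          positivity
      _ = w ^ (z.re - 1) * Real.exp (-((a.re + 1) * w))
          + w ^ (z.re - 2) * Real.exp (-((a.re + 1) * w)) := by
          have e1 : Real.exp (-(a.re * w)) * Real.exp (-w) = Real.exp (-((a.re + 1) * w)) := by
            rw [← Real.exp_add]; ring_nf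
          have e2 : w ^ (z.re - 2) = w ^ (z.re - 1) * w⁻¹ := by
            rw [show z.re - 2 = (z.re - 1) + (-1) by ring, Real.rpow_add hw',
              Real.rpow_neg_one]
          rw [e2, ← e1]
          ring

lemma aux_hasSum_geom {a : ℂ} {w : ℝ} (hw : 0 < w) :
    HasSum (fun m : ℕ => Complex.exp (-(a + 1 + m) * w))
      (Complex.exp (-a * w) / (Complex.exp (w:ℂ) - 1)) := by
  have hnorm : ‖Complex.exp (-(w:ℂ))‖ < 1 := by
    rw [Complex.norm_exp]
    simp only [Complex.neg_re, Complex.ofReal_re]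
    exact Real.exp_lt_one_iff.mpr (by linarith)
  have hgeom := hasSum_geometric_of_norm_lt_one hnorm
  have hg2 := hgeom.mul_left (Complex.exp (-(a + 1) * w))
  have hrw : ∀ m : ℕ, Complex.exp (-(a + 1) * w) * Complex.exp (-(w:ℂ)) ^ m
      = Complex.exp (-(a + 1 + m) * w) := by
    intro m
    rw [← Complex.exp_nat_mul, ← Complex.exp_add]
    congr 1
    ring
  rw [funext hrw] at hg2
  convert hg2 using 1
  · rfl
  have hne : Complex.exp (w:ℂ) - 1 ≠ 0 := aux_cexp_sub_one_ne hw
  have hmul : (1 - Complex.exp (-(w:ℂ))) * Complex.exp (w:ℂ) = Complex.exp (w:ℂ) - 1 := by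
    rw [sub_mul, one_mul, ← Complex.exp_add]
    simp
  have hsplit : Complex.exp (-(a+1) * w) = Complex.exp (-a * w) * Complex.exp (-(w:ℂ)) := by
    rw [← Complex.exp_add]
    congr 1
    ring
  rw [← hmul, hsplit, div_eq_mul_inv, mul_inv, ← Complex.exp_neg]
  ring


lemma aux_integral_eq {z a : ℂ} (ha : 0 < a.re) (hz : 1 < z.re) :
    (∫ w : ℝ in Ioi 0, (w:ℂ) ^ (z - 1) * Complex.exp (-a * w) / (Complex.exp (w:ℂ) - 1))
      = Complex.Gamma z * zetaSeries z (a + 1) := by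
  set f : ℕ → ℝ → ℂ := fun m w => (w:ℂ) ^ (z - 1) * Complex.exp (-(a + 1 + m) * w) with hf
  have hcre : ∀ m : ℕ, 0 < (a + 1 + (m:ℂ)).re := by
    intro m
    simp only [Complex.add_re, Complex.one_re, Complex.natCast_re]
    positivity
  have hint : ∀ m, Integrable (f m) (volume.restrict (Ioi 0)) := fun m =>
    aux_int_cpow_cexp (by linarith) (hcre m)
  have hnorm_int : ∀ m : ℕ, (∫ w in Ioi 0, ‖f m w‖)
      = (1/(a.re + 1 + m)) ^ z.re * Real.Gamma z.re := by
    intro m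
    rw [← Real.integral_rpow_mul_exp_neg_mul_Ioi (by linarith : 0 < z.re)
      (show (0:ℝ) < a.re + 1 + m by positivity)]
    apply setIntegral_congr_fun measurableSet_Ioi
    intro w hw
    simp only [hf]
    rw [aux_norm_cpow_mul_cexp hw]
    congr 2
  have hsum : Summable fun m : ℕ => ∫ w in Ioi 0, ‖f m w‖ := by
    rw [funext hnorm_int]
    apply Summable.mul_right
    have hbase : Summable (fun m : ℕ => 1 / ((m:ℝ) + 1) ^ z.re) := by
      have h0 : Summable (fun m : ℕ => 1 / ((m:ℝ)) ^ z.re) :=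
        Real.summable_one_div_nat_rpow.mpr hz
      have := (summable_nat_add_iff 1).mpr h0
      refine this.congr fun m => ?_
      push_cast
      ring_nf
    refine hbase.of_nonneg_of_le (fun m => ?_) (fun m => ?_)
    · positivity
    · have h1 : (0:ℝ) < (m:ℝ) + 1 := by positivity
      have h2 : ((m:ℝ) + 1) ≤ a.re + 1 + m := by linarith
      calc (1/(a.re + 1 + m)) ^ z.re ≤ (1/((m:ℝ)+1)) ^ z.re := by
            apply Real.rpow_le_rpow (by positivity) ?_ (by linarith)
            apply one_div_le_one_div_of_le h1 h2
        _ = 1 / ((m:ℝ)+1) ^ z.re := by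
            rw [div_rpow zero_le_one h1.le, Real.one_rpow]
  have hhs := hasSum_integral_of_summable_integral_norm hint hsum
  have hvals : ∀ m : ℕ, (∫ w in Ioi 0, f m w) = Complex.Gamma z * (a + 1 + m) ^ (-z) :=
    fun m => aux_gamma_integral (by linarith) (hcre m)
  have htsum_eq : ∀ w ∈ Ioi (0:ℝ), (∑' m, f m w)
      = (w:ℂ) ^ (z - 1) * Complex.exp (-a * w) / (Complex.exp (w:ℂ) - 1) := by
    intro w hw
    have := (aux_hasSum_geom (a := a) hw).mul_left ((w:ℂ) ^ (z - 1))
    rw [mul_div_assoc]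
    exact this.tsum_eq
  calc (∫ w : ℝ in Ioi 0, (w:ℂ) ^ (z - 1) * Complex.exp (-a * w) / (Complex.exp (w:ℂ) - 1))
      = ∫ w : ℝ in Ioi 0, ∑' m, f m w :=
        (setIntegral_congr_fun measurableSet_Ioi (fun w hw => htsum_eq w hw)).symm
    _ = ∑' m, ∫ w in Ioi 0, f m w := hhs.tsum_eq.symm
    _ = ∑' m : ℕ, Complex.Gamma z * (a + 1 + m) ^ (-z) := by rw [funext hvals]
    _ = Complex.Gamma z * zetaSeries z (a + 1) := by
        rw [tsum_mul_left]
        rfl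

theorem stmt_7 (n : ℕ) (a s : ℂ) (ha : 0 < a.re) (hs : (2 * n : ℝ) + 1 < s.re) :
    ∫ w in Ioi (0 : ℝ),
        Complex.exp (-a * w) * (w : ℂ) ^ (s - 2 * n - 1) *
          laguerre (2 * n) (s - 2 * n - 1) (a * w) / (Complex.exp w - 1) =
      ∑ j ∈ Finset.range (2 * n + 1),
        (-1) ^ j * Complex.Gamma s * a ^ j * zetaSeries (s - 2 * n + j) (a + 1) /
          ((Nat.factorial (2 * n - j) : ℂ) * (Nat.factorial j : ℂ)) := by
  have hz : ∀ j : ℕ, j ∈ Finset.range (2*n+1) → 1 < (s - 2*n + j).re := by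
    intro j hj
    have hre : (s - 2*n + j).re = s.re - 2*n + j := by
      simp [Complex.sub_re, Complex.add_re]
    rw [hre]
    have : (0:ℝ) ≤ (j:ℝ) := Nat.cast_nonneg j
    linarith [hs]
  set C : ℕ → ℂ := fun j => (-1)^j * Complex.Gamma s /
      (Complex.Gamma (s - 2*n + j) * ((2*n - j).factorial : ℂ) * ((j).factorial : ℂ)) with hC
  have hpoint : ∀ w ∈ Ioi (0:ℝ),
      Complex.exp (-a * w) * (w:ℂ) ^ (s - 2*n - 1) *
          laguerre (2*n) (s - 2*n - 1) (a * w) / (Complex.exp (w:ℂ) - 1)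
      = ∑ j ∈ Finset.range (2*n+1), (C j * a^j) *
          ((w:ℂ) ^ ((s - 2*n + j) - 1) * Complex.exp (-a * w) / (Complex.exp (w:ℂ) - 1)) := by
    intro w hw
    have hw' : (0:ℝ) < w := hw
    rw [laguerre, Finset.mul_sum, Finset.sum_div]
    apply Finset.sum_congr rfl
    intro j hj
    have e1 : ((2*n : ℕ) : ℂ) + (s - 2*n - 1) + 1 = s := by push_cast; ring
    have e2 : (s - 2*n - 1) + j + 1 = s - 2*n + j := by ring
    rw [e1, e2]
    have e3 : (a * (w:ℂ))^j = a^j * (w:ℂ)^(j:ℕ) := mul_pow a _ j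
    have e4 : (w:ℂ) ^ ((s - 2*n + j) - 1) = (w:ℂ) ^ (s - 2*n - 1) * (w:ℂ)^(j:ℕ) := by
      rw [← Complex.cpow_natCast, ← Complex.cpow_add _ _ (Complex.ofReal_ne_zero.mpr hw'.ne')]
      congr 1
      ring
    rw [e3, e4, hC]
    ring
  rw [setIntegral_congr_fun measurableSet_Ioi hpoint]
  rw [MeasureTheory.integral_finset_sum _ (fun j hj =>
    (aux_integrand_integrable ha (hz j hj)).const_mul (C j * a^j))]
  apply Finset.sum_congr rfl
  intro j hj
  rw [MeasureTheory.integral_const_mul, aux_integral_eq ha (hz j hj)]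
  have hΓ : Complex.Gamma (s - 2*n + j) ≠ 0 := by
    apply Complex.Gamma_ne_zero
    intro m hm
    have := congrArg Complex.re hm
    simp only [Complex.neg_re, Complex.natCast_re] at this
    have h1 := hz j hj
    rw [this] at h1
    have : (0:ℝ) ≤ (m:ℝ) := Nat.cast_nonneg m
    linarith
  have hf1 : ((2*n - j).factorial : ℂ) ≠ 0 := Nat.cast_ne_zero.mpr (Nat.factorial_ne_zero _)
  have hf2 : ((j).factorial : ℂ) ≠ 0 := Nat.cast_ne_zero.mpr (Nat.factorial_ne_zero _)
  rw [hC]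
  field_simp
end

section
/- For Re(s) > 1 and Re(a) > 0, ∫₀^∞ t^{s−1} e^{−at}/(1 + e^{−t}) dt = Γ(s)(−ζ(s,a) + 2^{1−s} ζ(s,a/2)). -/
open Real Complex MeasureTheory Set Finset
open scoped Topology

namespace Stmt10


/-- positive real times cpow splits -/
lemma ofReal_mul_cpow {r : ℝ} (hr : 0 < r) {x : ℂ} (hx : x ≠ 0) (s : ℂ) :
    ((r : ℂ) * x) ^ s = (r : ℂ) ^ s * x ^ s := by
  have hr' : (r : ℂ) ≠ 0 := ofReal_ne_zero.mpr hr.ne'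
  rw [cpow_def_of_ne_zero (mul_ne_zero hr' hx), Complex.log_ofReal_mul hr hx, add_mul,
    Complex.exp_add, ← cpow_def_of_ne_zero hx, cpow_def_of_ne_zero hr',
    Complex.ofReal_log hr.le]

lemma realIntegrable {σ : ℝ} (hσ : -1 < σ) {c : ℝ} (hc : 0 < c) :
    IntegrableOn (fun t : ℝ ↦ t ^ σ * Real.exp (-c * t)) (Ioi 0) := by
  simpa [Real.rpow_one] using integrableOn_rpow_mul_exp_neg_mul_rpow hσ one_pos hc

lemma norm_term {s z : ℂ} {t : ℝ} (ht : 0 < t) :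
    ‖(t : ℂ) ^ (s - 1) * Complex.exp (-z * t)‖ = t ^ (s.re - 1) * Real.exp (-z.re * t) := by
  have h1 : (-z * (t : ℂ)).re = -z.re * t := by simp [Complex.mul_re]
  rw [norm_mul, Complex.norm_exp,
    Complex.norm_cpow_eq_rpow_re_of_pos ht, sub_re, one_re, h1]

lemma aesm (s w : ℂ) :
    AEStronglyMeasurable (fun t : ℝ ↦ (t : ℂ) ^ (s - 1) * Complex.exp (-w * t))
      (volume.restrict (Ioi 0)) := by
  apply ContinuousOn.aestronglyMeasurable ?_ measurableSet_Ioi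
  apply ContinuousOn.mul
  · exact Complex.continuous_ofReal.continuousOn.cpow_const
      (fun t ht ↦ Complex.mem_slitPlane_iff.mpr (Or.inl (by simpa using mem_Ioi.mp ht)))
  · exact (Complex.continuous_exp.comp
      (continuous_const.mul Complex.continuous_ofReal)).continuousOn

lemma complexIntegrable {s z : ℂ} (hs : 0 < s.re) (hz : 0 < z.re) :
    IntegrableOn (fun t : ℝ ↦ (t : ℂ) ^ (s - 1) * Complex.exp (-z * t)) (Ioi 0) := by
  refine (realIntegrable (σ := s.re - 1) (by linarith) hz).mono' (aesm s z) ?_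
  filter_upwards [ae_restrict_mem measurableSet_Ioi] with t ht
  rw [norm_term (mem_Ioi.mp ht)]


lemma diff_f {s : ℂ} (hs : 0 < s.re) {w₀ : ℂ} (hw₀ : 0 < w₀.re) :
    DifferentiableAt ℂ
      (fun w : ℂ ↦ ∫ t : ℝ in Ioi 0, (t : ℂ) ^ (s - 1) * Complex.exp (-w * t)) w₀ := by
  set ε : ℝ := w₀.re / 2 with hε_def
  have hε : 0 < ε := by positivity
  have hball : ∀ w ∈ Metric.ball w₀ ε, ε ≤ w.re := by
    intro w hw
    have h1 : ‖w - w₀‖ < ε := by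
      simpa [Complex.dist_eq] using Metric.mem_ball.mp hw
    have h2 : |(w - w₀).re| ≤ ‖w - w₀‖ := Complex.abs_re_le_norm _
    have h3 : |w.re - w₀.re| < ε := by simpa [Complex.sub_re] using lt_of_le_of_lt h2 h1
    have := abs_lt.mp h3
    simp only [hε_def]; linarith [this.1]
  have main := hasDerivAt_integral_of_dominated_loc_of_deriv_le (μ := volume.restrict (Ioi 0))
    (F := fun (w : ℂ) (t : ℝ) ↦ (t : ℂ) ^ (s - 1) * Complex.exp (-w * t))
    (F' := fun (w : ℂ) (t : ℝ) ↦ (t : ℂ) ^ (s - 1) * (Complex.exp (-w * t) * -t))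
    (x₀ := w₀) (bound := fun t : ℝ ↦ t ^ s.re * Real.exp (-ε * t)) (Metric.ball_mem_nhds w₀ hε)
    (Filter.Eventually.of_forall fun w ↦ aesm s w)
    (complexIntegrable hs hw₀)
    ?_ ?_ (realIntegrable (σ := s.re) (by linarith) hε) ?_
  · exact main.2.differentiableAt
  · -- measurability of F' w₀
    apply ContinuousOn.aestronglyMeasurable ?_ measurableSet_Ioi
    apply ContinuousOn.mul
    · exact Complex.continuous_ofReal.continuousOn.cpow_const
        (fun t ht ↦ Complex.mem_slitPlane_iff.mpr (Or.inl (by simpa using mem_Ioi.mp ht)))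
    · exact ((Complex.continuous_exp.comp
        (continuous_const.mul Complex.continuous_ofReal)).mul
        (Complex.continuous_ofReal.neg)).continuousOn
  · -- bound
    filter_upwards [ae_restrict_mem measurableSet_Ioi] with t ht w hw
    have ht' : (0 : ℝ) < t := mem_Ioi.mp ht
    have hnorm : ‖(t : ℂ) ^ (s - 1) * (Complex.exp (-w * t) * -(t : ℂ))‖ =
        t ^ (s.re - 1) * (Real.exp (-w.re * t) * t) := by
      have h1 : (-w * (t : ℂ)).re = -w.re * t := by simp [Complex.mul_re]
      rw [norm_mul, norm_mul, norm_neg,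
        Complex.norm_cpow_eq_rpow_re_of_pos ht', sub_re, one_re,
        Complex.norm_exp, h1, Complex.norm_real,
        Real.norm_eq_abs, abs_of_pos ht']
    rw [hnorm]
    have h2 : t ^ (s.re - 1) * (Real.exp (-w.re * t) * t) =
        t ^ s.re * Real.exp (-w.re * t) := by
      rw [Real.rpow_sub_one ht'.ne']
      field_simp
    rw [h2]
    have h3 : Real.exp (-w.re * t) ≤ Real.exp (-ε * t) := by
      apply Real.exp_le_exp.mpr
      have := hball w hw
      nlinarith
    exact mul_le_mul_of_nonneg_left h3 (Real.rpow_nonneg ht'.le _)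
  · -- derivative
    filter_upwards [ae_restrict_mem measurableSet_Ioi] with t ht w hw
    have h1 : HasDerivAt (fun w : ℂ ↦ -w * t) (-(t : ℂ)) w := by
      simpa using ((hasDerivAt_id w).neg.mul_const (t : ℂ))
    exact (h1.cexp).const_mul _

lemma integral_cpow_mul_exp_neg {s : ℂ} (hs : 0 < s.re) {z : ℂ} (hz : 0 < z.re) :
    ∫ t : ℝ in Ioi 0, (t : ℂ) ^ (s - 1) * Complex.exp (-z * t)
      = Complex.Gamma s * z ^ (-s) := by
  set U : Set ℂ := {w : ℂ | 0 < w.re} with hU_def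
  have hUopen : IsOpen U := isOpen_lt continuous_const Complex.continuous_re
  set f : ℂ → ℂ := fun w ↦ ∫ t : ℝ in Ioi 0, (t : ℂ) ^ (s - 1) * Complex.exp (-w * t)
    with hf_def
  set g : ℂ → ℂ := fun w ↦ Complex.Gamma s * w ^ (-s) with hg_def
  have key : ∀ r : ℝ, 0 < r → f ((r : ℂ)) = g ((r : ℂ)) := by
    intro r hr
    have h1 := integral_cpow_mul_exp_neg_mul_Ioi hs hr
    have h2 : f ((r : ℂ)) = ∫ t : ℝ in Ioi 0, (t : ℂ) ^ (s - 1) *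
        Complex.exp (-(↑r * ↑t)) := by
      simp only [hf_def, neg_mul]
    rw [h2, h1, hg_def, mul_comm]
    congr 1
    rw [one_div, Complex.inv_cpow _ _ (Complex.arg_ofReal_of_nonneg hr.le ▸ Real.pi_pos.ne),
      ← Complex.cpow_neg]
  have hf_diff : DifferentiableOn ℂ f U := fun w hw ↦
    (diff_f hs hw).differentiableWithinAt
  have hf_an : AnalyticOnNhd ℂ f U := hf_diff.analyticOnNhd hUopen
  have hg_an : AnalyticOnNhd ℂ g U := by
    intro w hw
    exact analyticAt_const.mul
      ((analyticAt_id.cpow analyticAt_const) (Complex.mem_slitPlane_iff.mpr (Or.inl hw)))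
  have hconn : IsPreconnected U := (convex_halfSpace_re_gt 0).isPreconnected
  have h1U : (1 : ℂ) ∈ U := by simp [hU_def]
  have freq : ∃ᶠ w in 𝓝[≠] (1 : ℂ), f w = g w := by
    have hseq : Filter.Tendsto (fun n : ℕ ↦ ((1 + 1 / (n + 1) : ℝ) : ℂ)) Filter.atTop
        (𝓝[≠] (1 : ℂ)) := by
      rw [tendsto_nhdsWithin_iff]
      constructor
      · have h : Filter.Tendsto (fun n : ℕ ↦ (1 + 1 / (n + 1) : ℝ)) Filter.atTop (𝓝 1) := by
          simpa using tendsto_const_nhds.add (tendsto_one_div_add_atTop_nhds_zero_nat (𝕜 := ℝ))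
        have h2 := (Complex.continuous_ofReal.tendsto 1).comp h
        simp only [Function.comp_def] at h2
        simpa using h2
      · filter_upwards with n
        simp only [mem_compl_iff, mem_singleton_iff]
        intro h
        have h' : (1 + 1 / (n + 1) : ℝ) = 1 := by exact_mod_cast h
        have : (1 / (n + 1) : ℝ) > 0 := by positivity
        linarith
    exact hseq.frequently (Filter.Frequently.of_forall fun n ↦ key _ (by positivity))
  have := hf_an.eqOn_of_preconnected_of_frequently_eq hg_an hconn h1U freq
  exact this hz


lemma summable_aux {σ : ℝ} (hσ : 1 < σ) {b : ℝ} (hb : 0 < b) :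
    Summable (fun n : ℕ ↦ (b + n) ^ (-σ)) := by
  rw [← summable_nat_add_iff 1]
  have hcomp : Summable (fun n : ℕ ↦ ((n + 1 : ℕ) : ℝ) ^ (-σ)) :=
    (summable_nat_add_iff 1).mpr (Real.summable_nat_rpow.mpr (by linarith))
  refine Summable.of_nonneg_of_le (fun n ↦ Real.rpow_nonneg (by positivity) _)
    (fun n ↦ ?_) hcomp
  apply Real.rpow_le_rpow_of_nonpos (by positivity) ?_ (by linarith)
  push_cast
  linarith

lemma summable_hurwitz {s w : ℂ} (hs : 1 < s.re) (hw : 0 < w.re) :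
    Summable (fun n : ℕ ↦ (w + (n : ℂ)) ^ (-s)) := by
  apply Summable.of_norm
  have hcomp : Summable (fun n : ℕ ↦ Real.exp (π * |s.im|) * (w.re + n) ^ (-s.re)) :=
    (summable_aux hs hw).mul_left _
  refine Summable.of_nonneg_of_le (fun n ↦ norm_nonneg _) (fun n ↦ ?_) hcomp
  have hre : 0 < (w + (n : ℂ)).re := by
    simp only [Complex.add_re, Complex.natCast_re]
    positivity
  have hne : w + (n : ℂ) ≠ 0 := fun h ↦ by simp [h] at hre
  rw [Complex.norm_cpow_of_ne_zero hne, div_eq_mul_inv, ← Real.exp_neg,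
    mul_comm (Real.exp _)]
  have h1 : ‖w + n‖ ^ (-s).re ≤ (w.re + n) ^ (-s.re) := by
    rw [Complex.neg_re]
    apply Real.rpow_le_rpow_of_nonpos
    · simpa [Complex.add_re] using hre
    · have := Complex.re_le_norm (w + n)
      simpa [Complex.add_re] using this
    · linarith
  have h2 : Real.exp (-((w + (n:ℂ)).arg * (-s).im)) ≤ Real.exp (π * |s.im|) := by
    apply Real.exp_le_exp.mpr
    rw [Complex.neg_im]
    have habs : |(w + (n:ℂ)).arg * s.im| ≤ π * |s.im| := by
      rw [abs_mul]
      exact mul_le_mul_of_nonneg_right (Complex.abs_arg_le_pi _) (abs_nonneg _)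
    calc -((w + (n:ℂ)).arg * -s.im) = (w + (n:ℂ)).arg * s.im := by ring
      _ ≤ |(w + (n:ℂ)).arg * s.im| := le_abs_self _
      _ ≤ π * |s.im| := habs
  exact mul_le_mul h1 h2 (Real.exp_pos _).le (Real.rpow_nonneg (by positivity) _)


end Stmt10

open Stmt10

set_option maxHeartbeats 2000000 in
theorem stmt_10 (s a : ℂ) (hs : 1 < s.re) (ha : 0 < a.re) :
    ∫ t in Ioi (0 : ℝ),
        (t : ℂ) ^ (s - 1) * Complex.exp (-a * t) / (1 + Complex.exp (-(t : ℂ))) =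
      Complex.Gamma s * (-zetaSeries s a + 2 ^ (1 - s) * zetaSeries s (a / 2)) := by
  have hs0 : 0 < s.re := by linarith
  set c : ℕ → ℂ := fun n ↦ (a + n) ^ (-s) with hc_def
  set F : ℕ → ℝ → ℂ :=
    fun n t ↦ (-1 : ℂ) ^ n * ((t : ℂ) ^ (s - 1) * Complex.exp (-(a + n) * t)) with hF_def
  have hre : ∀ n : ℕ, 0 < (a + (n : ℂ)).re := by
    intro n
    simp only [Complex.add_re, Complex.natCast_re]
    positivity
  -- step 1: pointwise expansion
  have hgeom : ∀ t ∈ Ioi (0 : ℝ),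
      HasSum (fun n ↦ F n t)
        ((t : ℂ) ^ (s - 1) * Complex.exp (-a * t) / (1 + Complex.exp (-(t : ℂ)))) := by
    intro t ht
    have ht' : (0 : ℝ) < t := ht
    have hlt : ‖-Complex.exp (-(t : ℂ))‖ < 1 := by
      rw [norm_neg, Complex.norm_exp]
      have : (-(t : ℂ)).re = -t := by simp
      rw [this]
      exact Real.exp_lt_one_iff.mpr (by linarith)
    have h0 := hasSum_geometric_of_norm_lt_one hlt
    have h1 := h0.mul_left ((t : ℂ) ^ (s - 1) * Complex.exp (-a * t))
    have hfun : (fun n : ℕ ↦ ((t : ℂ) ^ (s - 1) * Complex.exp (-a * t)) *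
        (-Complex.exp (-(t : ℂ))) ^ n) = fun n ↦ F n t := by
      funext n
      have he : Complex.exp (-(a + n) * t) =
          Complex.exp (-a * t) * Complex.exp ((n : ℂ) * -t) := by
        rw [← Complex.exp_add]
        congr 1
        ring
      rw [hF_def]
      simp only
      rw [he, neg_pow, ← Complex.exp_nat_mul]
      ring
    rw [hfun, sub_neg_eq_add] at h1
    simpa [div_eq_mul_inv] using h1
  -- step 2: integrability and summability of norms
  have hint : ∀ n : ℕ, Integrable (F n) (volume.restrict (Ioi 0)) := by
    intro n
    exact ((complexIntegrable hs0 (hre n)).const_mul _)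
  have hnormint : ∀ n : ℕ, (∫ t in Ioi (0:ℝ), ‖F n t‖)
      = (1 / (a.re + n)) ^ s.re * Real.Gamma s.re := by
    intro n
    rw [← Real.integral_rpow_mul_exp_neg_mul_Ioi hs0
      (show (0 : ℝ) < a.re + n by positivity)]
    refine setIntegral_congr_fun measurableSet_Ioi (fun t ht ↦ ?_)
    rw [hF_def]
    simp only
    rw [norm_mul, norm_pow, norm_neg, norm_one, one_pow, one_mul,
      norm_term (mem_Ioi.mp ht)]
    congr 1
    simp [Complex.add_re]
    ring
  have hsum_int : Summable (fun n : ℕ ↦ ∫ t in Ioi (0:ℝ), ‖F n t‖) := by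
    refine Summable.congr ?_ (fun n ↦ (hnormint n).symm)
    apply Summable.mul_right
    refine Summable.congr (summable_aux hs ha) (fun n ↦ ?_)
    rw [one_div, Real.inv_rpow (by positivity), ← Real.rpow_neg (by positivity)]
  -- step 3: interchange
  have hmain := hasSum_integral_of_summable_integral_norm hint hsum_int
  have hintg : (∫ t in Ioi (0:ℝ), ∑' n, F n t) =
      ∫ t in Ioi (0:ℝ),
        (t : ℂ) ^ (s - 1) * Complex.exp (-a * t) / (1 + Complex.exp (-(t : ℂ))) :=
    setIntegral_congr_fun measurableSet_Ioi (fun t ht ↦ (hgeom t ht).tsum_eq)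
  rw [hintg] at hmain
  -- step 4: evaluate each integral
  have hval : ∀ n : ℕ, (∫ t in Ioi (0:ℝ), F n t)
      = (-1 : ℂ) ^ n * (Complex.Gamma s * c n) := by
    intro n
    rw [hF_def]
    simp only
    rw [MeasureTheory.integral_const_mul, integral_cpow_mul_exp_neg hs0 (hre n)]
  rw [funext hval] at hmain
  -- step 5: series identity
  have hca : Summable c := summable_hurwitz hs ha
  have ha2 : 0 < (a / 2).re := by
    rw [Complex.div_ofNat_re]
    positivity
  have hca2 : Summable (fun k : ℕ ↦ (a / 2 + k) ^ (-s)) := summable_hurwitz hs ha2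
  have heven_eq : ∀ k : ℕ, (2 : ℂ) ^ (-s) * (a / 2 + k) ^ (-s) = c (2 * k) := by
    intro k
    have hx : (a / 2 + (k : ℂ)) ≠ 0 := by
      intro h
      have h2 : 0 < (a / 2 + (k : ℂ)).re := by
        simp only [Complex.add_re, Complex.natCast_re]
        positivity
      simp [h] at h2
    have hb : a + ((2 * k : ℕ) : ℂ) = ((2 : ℝ) : ℂ) * (a / 2 + k) := by
      push_cast
      ring
    rw [hc_def]
    simp only
    rw [hb, ofReal_mul_cpow two_pos hx]
    norm_num
  have hE : HasSum (fun k ↦ c (2 * k)) ((2 : ℂ) ^ (-s) * zetaSeries s (a / 2)) := by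
    have h := (hca2.hasSum).mul_left ((2 : ℂ) ^ (-s))
    rw [zetaSeries]
    exact (funext heven_eq) ▸ h
  have hOsum : Summable (fun k : ℕ ↦ c (2 * k + 1)) :=
    hca.comp_injective (fun x y h ↦ by omega)
  have hO : HasSum (fun k ↦ c (2 * k + 1)) (∑' k, c (2 * k + 1)) := hOsum.hasSum
  have hzeta : zetaSeries s a = (2 : ℂ) ^ (-s) * zetaSeries s (a / 2) +
      ∑' k, c (2 * k + 1) := (hE.even_add_odd hO).tsum_eq
  have hSE : HasSum (fun k ↦ (-1 : ℂ) ^ (2 * k) * (Complex.Gamma s * c (2 * k)))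
      (Complex.Gamma s * ((2 : ℂ) ^ (-s) * zetaSeries s (a / 2))) := by
    simpa [pow_mul] using hE.mul_left (Complex.Gamma s)
  have hSO : HasSum (fun k ↦ (-1 : ℂ) ^ (2 * k + 1) * (Complex.Gamma s * c (2 * k + 1)))
      (-(Complex.Gamma s * ∑' k, c (2 * k + 1))) := by
    simpa [pow_succ, pow_mul] using (hO.mul_left (Complex.Gamma s)).neg
  have htotal := HasSum.even_add_odd (f := fun n ↦ (-1 : ℂ) ^ n * (Complex.Gamma s * c n)) hSE hSO
  rw [hmain.unique htotal]
  have h2s : (2 : ℂ) ^ (1 - s) = 2 * (2 : ℂ) ^ (-s) := by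
    rw [sub_eq_add_neg, Complex.cpow_add _ _ two_ne_zero, Complex.cpow_one]
  rw [h2s, hzeta]
  ring
end

section
/- For w ≥ 0 and β > 0, ∫₀^∞ cos(wt)/cosh(βt) dt = π/(2β cosh(πw/(2β))). -/
open Real MeasureTheory Set


lemma aux_beta (a : ℂ) (h0 : 0 < a.re) (h1 : a.re < 1) :
    ∫ v in Ioi (0:ℝ), (v:ℂ)^(a-1) / (1+v) = ↑π / Complex.sin (π * a) := by
  have himg : (fun v : ℝ => v/(1+v)) '' Ioi 0 = Ioo 0 1 := by
    ext p
    constructor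
    · rintro ⟨v, hv, rfl⟩
      simp only [mem_Ioi] at hv
      have h1v : 0 < 1 + v := by linarith
      constructor
      · exact div_pos hv h1v
      · rw [div_lt_one h1v]; linarith
    · rintro ⟨hp0, hp1⟩
      refine ⟨p/(1-p), ?_, ?_⟩
      · simp only [mem_Ioi]; exact div_pos hp0 (by linarith)
      · have : (1:ℝ) - p > 0 := by linarith
        field_simp
        ring
  have hderiv : ∀ v ∈ Ioi (0:ℝ), HasDerivWithinAt (fun v : ℝ => v/(1+v))
      (((1+v)^2)⁻¹) (Ioi 0) v := by
    intro v hv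
    simp only [mem_Ioi] at hv
    have h1v : (1:ℝ) + v ≠ 0 := by positivity
    have := (hasDerivAt_id v).div ((hasDerivAt_const v (1:ℝ)).add (hasDerivAt_id v)) h1v
    refine this.hasDerivWithinAt.congr_deriv ?_
    simp
  have hinj : InjOn (fun v : ℝ => v/(1+v)) (Ioi 0) := by
    intro u hu v hv h
    simp only [mem_Ioi] at hu hv
    simp only at h
    have h1u : (1:ℝ) + u ≠ 0 := by positivity
    have h1v : (1:ℝ) + v ≠ 0 := by positivity
    field_simp at h
    linarith
  have key := integral_image_eq_integral_abs_deriv_smul measurableSet_Ioi hderiv hinj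
    (fun p : ℝ => (p:ℂ)^(a-1) * ((1:ℂ)-p)^((1-a)-1))
  rw [himg] at key
  -- LHS of key is beta integral
  have hbeta : ∫ p in Ioo (0:ℝ) 1, (p:ℂ)^(a-1) * ((1:ℂ)-p)^((1-a)-1)
      = Complex.betaIntegral a (1-a) := by
    rw [Complex.betaIntegral, intervalIntegral.integral_of_le zero_le_one,
      integral_Ioc_eq_integral_Ioo]
  -- RHS of key is our integral
  have hrhs : ∫ v in Ioi (0:ℝ), |((1+v)^2)⁻¹| • ((((v/(1+v) : ℝ)):ℂ)^(a-1) *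
      ((1:ℂ)-((v/(1+v) : ℝ) : ℂ))^((1-a)-1)) = ∫ v in Ioi (0:ℝ), (v:ℂ)^(a-1) / (1+v) := by
    refine setIntegral_congr_fun measurableSet_Ioi (fun v hv => ?_)
    simp only [mem_Ioi] at hv
    have h1v : (0:ℝ) < 1 + v := by linarith
    have h1v' : ((1:ℂ) + v) ≠ 0 := by
      rw [show ((1:ℂ)+v) = ((1+v : ℝ) : ℂ) by push_cast; ring]
      exact_mod_cast h1v.ne'
    have hsub : (1:ℝ) - v/(1+v) = (1+v)⁻¹ := by field_simp; ring
    have hinv : (((1+v)⁻¹ : ℝ) : ℂ) = ((1+v : ℝ) : ℂ)⁻¹ := by push_cast; ring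
    have harg : ((1+v:ℝ) : ℂ).arg ≠ π := by
      rw [Complex.arg_ofReal_of_nonneg h1v.le]
      exact pi_ne_zero.symm
    have hc1 : (((v/(1+v) : ℝ)):ℂ)^(a-1) = (v:ℂ)^(a-1) * ((1+v:ℝ):ℂ)^(-(a-1)) := by
      rw [div_eq_mul_inv, Complex.ofReal_mul,
        Complex.mul_cpow_ofReal_nonneg hv.le (by positivity),
        hinv, Complex.inv_cpow _ _ harg, ← Complex.cpow_neg]
    have hc2 : ((1:ℂ)-((v/(1+v) : ℝ) : ℂ))^((1-a)-1) = ((1+v:ℝ):ℂ)^(-((1-a)-1)) := by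
      rw [show (1:ℂ)-((v/(1+v) : ℝ) : ℂ) = (((1 - v/(1+v) : ℝ)) : ℂ) by push_cast; ring,
        hsub, hinv, Complex.inv_cpow _ _ harg, ← Complex.cpow_neg]
    rw [hc1, hc2]
    rw [show |((1+v)^2)⁻¹| = ((1+v)^2)⁻¹ by rw [abs_of_pos]; positivity]
    rw [Complex.real_smul, mul_assoc, ← Complex.cpow_add _ _ (by exact_mod_cast h1v.ne')]
    rw [show -(a-1) + -((1-a)-1) = 1 by ring, Complex.cpow_one]
    have hne : ((1+v:ℝ):ℂ) ≠ 0 := by exact_mod_cast h1v.ne'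
    push_cast
    push_cast at hne
    field_simp
  rw [hbeta, hrhs] at key
  rw [← key]
  have h1a : 0 < (1-a).re := by simp [Complex.sub_re]; linarith
  have := Complex.Gamma_mul_Gamma_eq_betaIntegral h0 h1a
  rw [show a + (1-a) = 1 by ring, Complex.Gamma_one, one_mul] at this
  rw [← this, Complex.Gamma_mul_Gamma_one_sub]


lemma aux_key (x : ℝ) :
    ∫ u in Ioi (0:ℝ), (u:ℂ)^(Complex.I*x) / (1+(u:ℂ)^2)
      = ((π / (2 * Real.cosh (π*x/2)) : ℝ) : ℂ) := by
  set a : ℂ := 1/2 + Complex.I*x/2 with ha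
  have h0 : 0 < a.re := by simp [ha]
  have h1 : a.re < 1 := by simp [ha]; norm_num
  have hbeta := aux_beta a h0 h1
  have hsub := integral_comp_rpow_Ioi_of_pos (g := fun v : ℝ => (v:ℂ)^(a-1) / (1+v))
    (p := 2) two_pos
  rw [hbeta] at hsub
  have hcongr : ∫ u in Ioi (0:ℝ), ((2:ℝ) * u ^ ((2:ℝ) - 1)) •
      ((((u ^ (2:ℝ) : ℝ)):ℂ)^(a-1) / (1+((u ^ (2:ℝ) : ℝ) : ℂ)))
      = ∫ u in Ioi (0:ℝ), 2 * ((u:ℂ)^(Complex.I*x) / (1+(u:ℂ)^2)) := by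
    refine setIntegral_congr_fun measurableSet_Ioi (fun u hu => ?_)
    simp only [mem_Ioi] at hu
    have hu0 : (u:ℂ) ≠ 0 := by exact_mod_cast hu.ne'
    have h2 : (u:ℝ) ^ (2:ℝ) = u * u := by
      rw [show (2:ℝ) = ((2:ℕ):ℝ) by norm_num, Real.rpow_natCast]; ring
    have hc : (((u ^ (2:ℝ) : ℝ)):ℂ)^(a-1) = (u:ℂ)^(Complex.I*x) / (u:ℂ) := by
      rw [h2, Complex.ofReal_mul, Complex.mul_cpow_ofReal_nonneg hu.le hu.le,
        ← Complex.cpow_add _ _ hu0,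
        show (a-1) + (a-1) = Complex.I*x - 1 by rw [ha]; ring,
        Complex.cpow_sub _ _ hu0, Complex.cpow_one]
    rw [hc, h2]
    rw [show ((2:ℝ) * u ^ ((2:ℝ)-1)) = 2 * u by norm_num [Real.rpow_one]]
    have hden : (1:ℂ) + (u:ℂ)^2 ≠ 0 := by
      rw [show (1:ℂ) + (u:ℂ)^2 = ((1+u^2 : ℝ) : ℂ) by push_cast; ring]
      exact_mod_cast (by positivity : (0:ℝ) < 1+u^2).ne'
    rw [Complex.real_smul]
    push_cast
    field_simp
  rw [hcongr] at hsub
  rw [integral_const_mul] at hsub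
  have hsin : Complex.sin (↑π * a) = ↑(Real.cosh (π*x/2)) := by
    rw [ha, show (↑π : ℂ) * (1/2 + Complex.I*x/2) = ↑(π/2) + ↑(π*x/2) * Complex.I by
      push_cast; ring]
    rw [Complex.sin_add, ← Complex.ofReal_sin, ← Complex.ofReal_cos,
      Real.sin_pi_div_two, Real.cos_pi_div_two, Complex.cos_mul_I, ← Complex.ofReal_cosh]
    norm_num
  rw [hsin] at hsub
  have hcosh : Real.cosh (π*x/2) ≠ 0 := (Real.cosh_pos _).ne'
  have hJ : ∫ u in Ioi (0:ℝ), (u:ℂ)^(Complex.I*x) / (1+(u:ℂ)^2)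
      = (((π:ℝ):ℂ) / ((Real.cosh (π*x/2) : ℝ):ℂ)) / 2 := by
    rw [eq_div_iff (by norm_num : (2:ℂ) ≠ 0), mul_comm]
    exact hsub
  rw [hJ]
  push_cast
  ring


lemma aux_integrable (x : ℝ) :
    IntegrableOn (fun u : ℝ => (u:ℂ)^(Complex.I*x) / (1+(u:ℂ)^2)) (Ioi 0) := by
  have hmeas : AEStronglyMeasurable (fun u : ℝ => (u:ℂ)^(Complex.I*x) / (1+(u:ℂ)^2))
      (volume.restrict (Ioi 0)) := by
    refine ContinuousOn.aestronglyMeasurable ?_ measurableSet_Ioi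
    apply ContinuousOn.div
    · refine ContinuousOn.cpow (Complex.continuous_ofReal.continuousOn)
        continuousOn_const (fun u hu => ?_)
      exact Complex.ofReal_mem_slitPlane.2 hu
    · fun_prop
    · intro u hu
      rw [show (1:ℂ) + (u:ℂ)^2 = ((1+u^2 : ℝ) : ℂ) by push_cast; ring]
      exact_mod_cast (by positivity : (0:ℝ) < 1+u^2).ne'
  refine Integrable.mono' (g := fun u : ℝ => (1+u^2)⁻¹)
    (integrable_inv_one_add_sq.restrict) hmeas ?_
  filter_upwards [ae_restrict_mem measurableSet_Ioi] with u hu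
  simp only [mem_Ioi] at hu
  have h1 : ‖((u:ℂ)^(Complex.I*x))‖ = 1 := by
    rw [Complex.norm_cpow_eq_rpow_re_of_pos hu]
    simp
  rw [show (1:ℂ) + (u:ℂ)^2 = ((1+u^2 : ℝ) : ℂ) by push_cast; ring]
  rw [norm_div, h1, Complex.norm_real, Real.norm_eq_abs,
    abs_of_pos (by positivity : (0:ℝ) < 1+u^2), one_div]

lemma aux_real (x : ℝ) :
    ∫ u in Ioi (0:ℝ), Real.cos (x * Real.log u) / (1+u^2)
      = π / (2 * Real.cosh (π*x/2)) := by
  have hint := aux_integrable x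
  have h := integral_re hint
  simp only [RCLike.re_to_complex] at h
  rw [aux_key x, Complex.ofReal_re] at h
  rw [← h]
  refine setIntegral_congr_fun measurableSet_Ioi (fun u hu => ?_)
  simp only [mem_Ioi] at hu
  have hu0 : (u:ℂ) ≠ 0 := by exact_mod_cast hu.ne'
  have hcp : (u:ℂ)^(Complex.I*x) = Complex.exp (↑(x * Real.log u) * Complex.I) := by
    rw [Complex.cpow_def_of_ne_zero hu0, ← Complex.ofReal_log hu.le]
    push_cast
    ring_nf
  rw [show (1:ℂ) + (u:ℂ)^2 = ((1+u^2 : ℝ) : ℂ) by push_cast; ring]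
  rw [hcp, Complex.div_ofReal_re, Complex.exp_ofReal_mul_I_re]


lemma aux_cont (w β : ℝ) : Continuous (fun t : ℝ => Real.cos (w*t) / Real.cosh (β*t)) := by
  refine Continuous.div ?_ ?_ (fun t => (Real.cosh_pos _).ne') <;> fun_prop

lemma aux_integrable2 (w β : ℝ) (hβ : 0 < β) :
    IntegrableOn (fun t : ℝ => Real.cos (w*t) / Real.cosh (β*t)) (Ioi 0) := by
  refine Integrable.mono' (g := fun t : ℝ => 2 * Real.exp (-β * t))
    (((exp_neg_integrableOn_Ioi 0 hβ).const_mul 2)) ((aux_cont w β).aestronglyMeasurable.restrict) ?_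
  filter_upwards [ae_restrict_mem measurableSet_Ioi] with t ht
  simp only [mem_Ioi] at ht
  have hch : Real.exp (β*t) / 2 ≤ Real.cosh (β*t) := by
    rw [Real.cosh_eq]
    have := Real.exp_pos (-(β*t))
    linarith
  have hch0 : (0:ℝ) < Real.cosh (β*t) := Real.cosh_pos _
  rw [Real.norm_eq_abs, abs_div, abs_of_pos hch0]
  have h1 : |Real.cos (w*t)| / Real.cosh (β*t) ≤ 1 / Real.cosh (β*t) := by
    gcongr
    exact Real.abs_cos_le_one _
  refine h1.trans ?_
  rw [div_le_iff₀ hch0, neg_mul, Real.exp_neg]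
  have he := Real.exp_pos (β*t)
  rw [div_le_iff₀ (by norm_num : (0:ℝ) < 2)] at hch
  calc (1:ℝ) = (Real.exp (β*t))⁻¹ * Real.exp (β*t) := by
        field_simp
    _ ≤ 2 * (Real.exp (β*t))⁻¹ * Real.cosh (β*t) := by
        nlinarith [inv_pos.mpr he]

lemma aux_integrable3 (w β : ℝ) (hβ : 0 < β) :
    Integrable (fun t : ℝ => Real.cos (w*t) / Real.cosh (β*t)) := by
  rw [← integrableOn_univ, ← @Iio_union_Ici _ _ (0 : ℝ), integrableOn_union,
    integrableOn_Ici_iff_integrableOn_Ioi]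
  refine ⟨?_, aux_integrable2 w β hβ⟩
  rw [← (Measure.measurePreserving_neg (volume : Measure ℝ)).integrableOn_comp_preimage
      (Homeomorph.neg ℝ).measurableEmbedding]
  simp only [Function.comp_def, neg_preimage, neg_Iio, neg_zero, mul_neg, Real.cos_neg,
    Real.cosh_neg]
  exact aux_integrable2 w β hβ

lemma aux_sub (w β : ℝ) (hβ : 0 < β) :
    ∫ u in Ioi (0:ℝ), Real.cos ((w/β) * Real.log u) / (1+u^2)
      = β * ∫ t in Ioi (0:ℝ), Real.cos (w*t) / Real.cosh (β*t) := by
  set g : ℝ → ℝ := fun u => Real.cos ((w/β) * Real.log u) / (1+u^2) with hg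
  have hderiv : ∀ t ∈ (univ : Set ℝ), HasDerivWithinAt (fun t : ℝ => Real.exp (β*t))
      (β * Real.exp (β*t)) univ t := by
    intro t _
    have h' : HasDerivAt (fun t : ℝ => Real.exp (β*t)) (Real.exp (β*t) * (β*1)) t :=
      ((hasDerivAt_id t).const_mul β).exp
    rw [mul_one, mul_comm] at h'
    exact h'.hasDerivWithinAt
  have hinj : InjOn (fun t : ℝ => Real.exp (β*t)) univ := by
    refine Function.Injective.injOn ?_
    intro s t h
    simp only at h
    have := Real.exp_injective h
    exact mul_left_cancel₀ hβ.ne' this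
  have himg : (fun t : ℝ => Real.exp (β*t)) '' univ = Ioi 0 := by
    rw [image_univ]
    ext y
    simp only [mem_range, mem_Ioi]
    constructor
    · rintro ⟨t, rfl⟩; exact Real.exp_pos _
    · intro hy
      exact ⟨Real.log y / β, by rw [mul_div_cancel₀ _ hβ.ne', Real.exp_log hy]⟩
  have key := integral_image_eq_integral_abs_deriv_smul MeasurableSet.univ hderiv hinj g
  rw [himg, Measure.restrict_univ] at key
  rw [key]
  have hcongr : ∀ t : ℝ, |β * Real.exp (β*t)| • g (Real.exp (β*t))
      = (β/2) * (Real.cos (w*t) / Real.cosh (β*t)) := by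
    intro t
    have he := Real.exp_pos (β*t)
    have hch := Real.cosh_pos (β*t)
    rw [hg]
    simp only [smul_eq_mul, Real.log_exp]
    rw [abs_of_pos (by positivity : (0:ℝ) < β * Real.exp (β*t)),
      show w/β*(β*t) = w*t by field_simp,
      Real.cosh_eq, Real.exp_neg]
    have h1 : (1:ℝ) + Real.exp (β*t)^2 ≠ 0 := by positivity
    field_simp
    ring
  simp_rw [hcongr]
  rw [integral_const_mul]
  have heven : ∫ t : ℝ, Real.cos (w*t) / Real.cosh (β*t)
      = 2 * ∫ t in Ioi (0:ℝ), Real.cos (w*t) / Real.cosh (β*t) := by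
    have hint := aux_integrable3 w β hβ
    rw [← intervalIntegral.integral_Iic_add_Ioi (hint.integrableOn) (hint.integrableOn)]
    have : ∫ t in Iic (0:ℝ), Real.cos (w*t) / Real.cosh (β*t)
        = ∫ t in Ioi (0:ℝ), Real.cos (w*t) / Real.cosh (β*t) := by
      have h2 := integral_comp_neg_Iic (0:ℝ) (fun t => Real.cos (w*t) / Real.cosh (β*t))
      simp only [mul_neg, Real.cos_neg, Real.cosh_neg, neg_zero] at h2
      exact h2
    rw [this]; ring
  rw [heven]; ring

theorem stmt_14 (w β : ℝ) (hw : 0 ≤ w) (hβ : 0 < β) :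
    ∫ t in Ioi (0 : ℝ), Real.cos (w * t) / Real.cosh (β * t) =
      π / (2 * β * Real.cosh (π * w / (2 * β))) := by
  have h1 := aux_sub w β hβ
  rw [aux_real (w/β)] at h1
  rw [show π * (w/β) / 2 = π * w / (2*β) by rw [mul_div_assoc', div_div, mul_comm β 2]] at h1
  have hI : ∫ t in Ioi (0:ℝ), Real.cos (w * t) / Real.cosh (β * t)
      = π / (2 * Real.cosh (π * w / (2*β))) / β := by
    rw [eq_div_iff hβ.ne', mul_comm]
    exact h1.symm
  rw [hI, div_div]
  ring_nf
end
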